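/- Let 1 < p < ∞ and let (f_n) be a sequence of nonnegative functions in L^p([0,1]) with sup_n ‖f_n‖_p < ∞. Then for every ε > 0 there exists r_0 > 0 such that for all r ≥ r_0, the set {n : r^p · μ(f_n > r) < ε^p} belongs to any fixed nonprincipal ultrafilter 𝒰 on ℕ; equivalently, lim_{r→∞} lim_{n,𝒰} ‖r·I(f_n > r)‖_p = 0. -/

import Mathlib

open MeasureTheory Filter Set
open scoped ENNReal NNReal

noncomputable section

/-- Lebesgue measure restricted to `[0,1]`. -/
def μ01 : Measure ℝ := volume.restrict (Set.Icc (0:ℝ) 1)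

/-- The `L^p([0,1])` norm of a function, as a real number. -/
def lpNorm (p : ℝ) (f : ℝ → ℝ) : ℝ := (eLpNorm f (ENNReal.ofReal p) μ01).toReal

instance : IsFiniteMeasure μ01 := by
  constructor
  rw [μ01, Measure.restrict_apply_univ]
  simp [Real.volume_Icc]

/-- For nonnegative functions `f n` in `L^p` with uniformly bounded norms,
`lim_{r→∞} lim_{n,𝒰} ‖r · I(f_n > r)‖_p = 0`, expressed via sets in the ultrafilter. -/
theorem stmt0 (p : ℝ) (hp : 1 < p) (U : Ultrafilter ℕ)
    (hU : (U : Filter ℕ) ≤ Filter.cofinite)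
    (f : ℕ → ℝ → ℝ) (hnn : ∀ n x, 0 ≤ f n x)
    (hmem : ∀ n, MemLp (f n) (ENNReal.ofReal p) μ01)
    (C : ℝ) (hC : ∀ n, lpNorm p (f n) ≤ C) :
    ∀ ε > (0:ℝ), ∃ r0 > (0:ℝ), ∀ r ≥ r0,
      {n : ℕ | r ^ p * (μ01 {x | r < f n x}).toReal < ε ^ p} ∈ U := by
  have hp0 : (0:ℝ) < p := by linarith
  intro ε hε
  by_contra hcon
  push_neg at hcon
  -- turn "not in U" into "complement in U"
  have Bmem : ∀ r0 > (0:ℝ), ∃ r, r0 ≤ r ∧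
      {n : ℕ | ε ^ p ≤ r ^ p * (μ01 {x | r < f n x}).toReal} ∈ U := by
    intro r0 hr0
    obtain ⟨r, hr, hnotin⟩ := hcon r0 hr0
    refine ⟨r, hr, ?_⟩
    have := (Ultrafilter.compl_mem_iff_notMem (f := U)).2 hnotin
    convert this using 1
    ext n
    simp [not_lt]
  -- recursive construction of scales
  have H : ∀ prev : ℝ, ∃ r, max 1 ((2:ℝ) ^ (1/p) * prev) ≤ r ∧
      {n : ℕ | ε ^ p ≤ r ^ p * (μ01 {x | r < f n x}).toReal} ∈ U := by
    intro prev
    exact Bmem _ (lt_of_lt_of_le one_pos (le_max_left _ _))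
  choose g hg1 hg2 using H
  let r : ℕ → ℝ := fun j => Nat.rec (0:ℝ) (fun _ prev => g prev) j
  have hrs : ∀ j, r (j+1) = g (r j) := fun j => rfl
  have hr0 : r 0 = 0 := rfl
  have hrnn : ∀ j, 0 ≤ r j := by
    intro j
    cases j with
    | zero => exact le_of_eq hr0.symm
    | succ j =>
      rw [hrs]
      exact le_trans (le_trans zero_le_one (le_max_left _ _)) (hg1 (r j))
  have h2 : ∀ j, 2 * r j ^ p ≤ r (j+1) ^ p := by
    intro j
    have ha : (2:ℝ) ^ (1/p) * r j ≤ r (j+1) := by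
      rw [hrs]; exact le_trans (le_max_right _ _) (hg1 (r j))
    have hb : ((2:ℝ) ^ (1/p) * r j) ^ p = 2 * r j ^ p := by
      rw [Real.mul_rpow (by positivity) (hrnn j),
        ← Real.rpow_mul (by norm_num : (0:ℝ) ≤ 2),
        one_div_mul_cancel (ne_of_gt hp0), Real.rpow_one]
    calc 2 * r j ^ p = ((2:ℝ) ^ (1/p) * r j) ^ p := hb.symm
      _ ≤ r (j+1) ^ p := Real.rpow_le_rpow (mul_nonneg (by positivity) (hrnn j)) ha hp0.le
  have hBU : ∀ j, {n : ℕ | ε ^ p ≤ r (j+1) ^ p * (μ01 {x | r (j+1) < f n x}).toReal} ∈ U := by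
    intro j; rw [hrs]; exact hg2 (r j)
  -- pick K large
  have hεp : (0:ℝ) < ε ^ p := Real.rpow_pos_of_pos hε p
  obtain ⟨K, hK⟩ := exists_nat_gt ((C ^ p * 2) / ε ^ p)
  have hK' : C ^ p * 2 < K * ε ^ p := (div_lt_iff₀ hεp).mp hK
  -- pick n in the intersection of bad sets
  have hInter : (⋂ j ∈ Finset.range K,
      {n : ℕ | ε ^ p ≤ r (j+1) ^ p * (μ01 {x | r (j+1) < f n x}).toReal}) ∈ U := by
    exact (Filter.biInter_finset_mem (Finset.range K)).mpr fun j _ => hBU j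
  obtain ⟨n, hn⟩ := Ultrafilter.nonempty_of_mem hInter
  simp only [Set.mem_iInter, Set.mem_setOf_eq] at hn
  -- measurable nonnegative representative
  obtain ⟨g0, hg0meas, hfg0⟩ : ∃ g0, Measurable g0 ∧ f n =ᵐ[μ01] g0 :=
    ⟨_, (hmem n).1.aemeasurable.measurable_mk, (hmem n).1.aemeasurable.ae_eq_mk⟩
  set G : ℝ → ℝ := fun x => max (g0 x) 0 with hGdef
  have hGmeas : Measurable G := hg0meas.max measurable_const
  have hfG : f n =ᵐ[μ01] G := by
    filter_upwards [hfg0] with x hx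
    simp only [hGdef, ← hx]
    exact (max_eq_left (hnn n x)).symm
  have hGnn : ∀ x, 0 ≤ G x := fun x => le_max_right _ _
  set S : ℕ → Set ℝ := fun j => {x | r (j+1) < G x} with hSdef
  have hSmeas : ∀ j, MeasurableSet (S j) := fun j =>
    measurableSet_lt measurable_const hGmeas
  have hmeq : ∀ j, μ01 {x | r (j+1) < f n x} = μ01 (S j) := by
    intro j
    refine measure_congr ?_
    filter_upwards [hfG] with x hx
    change (r (j+1) < f n x) = (r (j+1) < G x)
    rw [hx]
  -- the lintegral of G^p
  set J : ℝ≥0∞ := ∫⁻ x, (ENNReal.ofReal (G x)) ^ p ∂μ01 with hJdef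
  have hpe0 : ENNReal.ofReal p ≠ 0 := by
    simp only [ne_eq, ENNReal.ofReal_eq_zero, not_le]; exact hp0
  have htop : eLpNorm (f n) (ENNReal.ofReal p) μ01
      = (∫⁻ x, ((‖f n x‖₊ : ℝ≥0∞)) ^ p ∂μ01) ^ (1/p) := by
    rw [eLpNorm_eq_lintegral_rpow_enorm_toReal hpe0 ENNReal.ofReal_ne_top,
      ENNReal.toReal_ofReal hp0.le]
    rfl
  have hJf : (∫⁻ x, ((‖f n x‖₊ : ℝ≥0∞)) ^ p ∂μ01) = J := by
    refine lintegral_congr_ae ?_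
    filter_upwards [hfG] with x hx
    change ‖f n x‖ₑ ^ p = _
    rw [Real.enorm_eq_ofReal (hnn n x), hx]
  have hJtop : J ≠ ∞ := by
    have h1 : J ^ (1/p) ≠ ∞ := by
      rw [← hJf, ← htop]; exact (hmem n).2.ne
    intro h
    rw [h, ENNReal.top_rpow_of_pos (by positivity)] at h1
    exact h1 rfl
  have hJle : J.toReal ≤ C ^ p := by
    have h2 : _root_.lpNorm p (f n) = J.toReal ^ (1/p) := by
      rw [_root_.lpNorm, htop, hJf, ENNReal.toReal_rpow]
    have h3 : J.toReal ^ (1/p) ≤ C := h2 ▸ hC n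
    calc J.toReal = (J.toReal ^ (1/p)) ^ p := by
          rw [← Real.rpow_mul ENNReal.toReal_nonneg,
            one_div_mul_cancel (ne_of_gt hp0), Real.rpow_one]
      _ ≤ C ^ p := Real.rpow_le_rpow (Real.rpow_nonneg ENNReal.toReal_nonneg _) h3 hp0.le
  -- layer estimates
  set c : ℕ → ℝ := fun j => r (j+1) ^ p - r j ^ p with hcdef
  have hc0 : ∀ j, 0 ≤ c j := by
    intro j
    have := h2 j
    have h4 : 0 ≤ r j ^ p := Real.rpow_nonneg (hrnn j) p
    simp only [hcdef]; linarith
  -- pointwise telescoping bound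
  have key : ∀ (k : ℕ) (x : ℝ),
      ∑ j ∈ Finset.range k, (S j).indicator (fun _ => ENNReal.ofReal (c j)) x
        ≤ ENNReal.ofReal (G x ^ p) := by
    intro k x
    induction k with
    | zero => simp
    | succ k ih =>
      by_cases hx : r (k+1) < G x
      · calc ∑ j ∈ Finset.range (k+1), (S j).indicator (fun _ => ENNReal.ofReal (c j)) x
            ≤ ∑ j ∈ Finset.range (k+1), ENNReal.ofReal (c j) :=
              Finset.sum_le_sum fun j _ => Set.indicator_apply_le fun _ => le_rfl
          _ = ENNReal.ofReal (∑ j ∈ Finset.range (k+1), c j) :=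
              (ENNReal.ofReal_sum_of_nonneg fun j _ => hc0 j).symm
          _ ≤ ENNReal.ofReal (G x ^ p) := by
              refine ENNReal.ofReal_le_ofReal ?_
              have htel : ∑ j ∈ Finset.range (k+1), c j = r (k+1) ^ p - r 0 ^ p :=
                Finset.sum_range_sub (fun j => r j ^ p) (k+1)
              rw [htel, hr0, Real.zero_rpow (ne_of_gt hp0), sub_zero]
              exact Real.rpow_le_rpow (hrnn (k+1)) hx.le hp0.le
      · rw [Finset.sum_range_succ, Set.indicator_of_notMem (show x ∉ S k from hx), add_zero]
        exact ih
  -- integrate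
  have hsum : ∑ j ∈ Finset.range K, ENNReal.ofReal (c j) * μ01 (S j) ≤ J := by
    calc ∑ j ∈ Finset.range K, ENNReal.ofReal (c j) * μ01 (S j)
        = ∑ j ∈ Finset.range K,
            ∫⁻ x, (S j).indicator (fun _ => ENNReal.ofReal (c j)) x ∂μ01 := by
          refine Finset.sum_congr rfl fun j _ => ?_
          rw [lintegral_indicator (hSmeas j), setLIntegral_const]
      _ = ∫⁻ x, ∑ j ∈ Finset.range K,
            (S j).indicator (fun _ => ENNReal.ofReal (c j)) x ∂μ01 :=
          (lintegral_finset_sum _ fun j _ =>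
            (measurable_const.indicator (hSmeas j))).symm
      _ ≤ J := lintegral_mono fun x => le_trans (key K x)
            (ENNReal.ofReal_rpow_of_nonneg (hGnn x) hp0.le).ge
  -- pass to reals
  have hterm_ne : ∀ j ∈ Finset.range K, ENNReal.ofReal (c j) * μ01 (S j) ≠ ∞ :=
    fun j _ => ENNReal.mul_ne_top ENNReal.ofReal_ne_top (measure_ne_top _ _)
  have hsumreal : ∑ j ∈ Finset.range K, c j * (μ01 (S j)).toReal ≤ C ^ p := by
    have h5 : (∑ j ∈ Finset.range K, ENNReal.ofReal (c j) * μ01 (S j)).toReal ≤ J.toReal :=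
      ENNReal.toReal_mono hJtop hsum
    rw [ENNReal.toReal_sum hterm_ne] at h5
    have h6 : ∀ j ∈ Finset.range K,
        (ENNReal.ofReal (c j) * μ01 (S j)).toReal = c j * (μ01 (S j)).toReal := by
      intro j _
      rw [ENNReal.toReal_mul, ENNReal.toReal_ofReal (hc0 j)]
    rw [Finset.sum_congr rfl h6] at h5
    exact le_trans h5 hJle
  -- lower bound each term
  have hlower : ∀ j ∈ Finset.range K, ε ^ p / 2 ≤ c j * (μ01 (S j)).toReal := by
    intro j hj
    have hm0 : 0 ≤ (μ01 (S j)).toReal := ENNReal.toReal_nonneg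
    have hnj : ε ^ p ≤ r (j+1) ^ p * (μ01 (S j)).toReal := by
      have := hn j hj
      rwa [hmeq j] at this
    have hcj : r (j+1) ^ p / 2 ≤ c j := by
      have := h2 j; simp only [hcdef]; linarith
    calc ε ^ p / 2 ≤ (r (j+1) ^ p * (μ01 (S j)).toReal) / 2 := by linarith
      _ = (r (j+1) ^ p / 2) * (μ01 (S j)).toReal := by ring
      _ ≤ c j * (μ01 (S j)).toReal := mul_le_mul_of_nonneg_right hcj hm0
  have hfinal : (K : ℝ) * (ε ^ p / 2) ≤ ∑ j ∈ Finset.range K, c j * (μ01 (S j)).toReal := by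
    have := Finset.card_nsmul_le_sum (Finset.range K)
      (fun j => c j * (μ01 (S j)).toReal) (ε ^ p / 2) hlower
    simpa [nsmul_eq_mul] using this
  have : (K : ℝ) * (ε ^ p / 2) ≤ C ^ p := le_trans hfinal hsumreal
  linarith

end
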